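/- Let P be a CPOS polygon. Set M_i := (P_i + P_{i+n})/2, v(i+1/2) := M_{i+1} − M_i and u_i := P_i − M_i (so u_{i+n} = −u_i and v(i+n+1/2) = v(i+1/2)). Let A¹ be the signed area of the polygon with vertices P_1, P_2, …, P_{n+1} and A² the signed area of the polygon with vertices P_{n+1}, P_{n+2}, …, P_{2n}, P_1 (the two regions into which the great diagonal d_1 divides P), where the signed area of a polygon with vertices X_1, …, X_m (indices mod m) is (1/2)Σ_{k=1}^m [X_k, X_{k+1}]. Then A² − A¹ = 2 Σ_{j=1}^n [v(j+1/2), u_j]. -/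

import Mathlib

open scoped BigOperators Classical

/-- `det2 v w` is the determinant of the 2×2 matrix with columns `v, w ∈ ℝ²`. -/
noncomputable def det2 (v w : ℝ × ℝ) : ℝ := v.1 * w.2 - v.2 * w.1

/-- A convex polygon with parallel opposite sides (CPOS polygon): vertices `P i`, `i : ℤ`,
periodic with period `2n`; the side vectors `e(i+1/2) = P(i+1) - P i` satisfy
`e(i+n+1/2) ∥ e(i+1/2)`, no two adjacent sides are parallel, and the polygon is
positively oriented: `[e(i+1/2), e(j+1/2)] > 0` for `1 ≤ i < j ≤ n`. -/
structure CPOS (n : ℕ) : Type where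
  P : ℤ → ℝ × ℝ
  hn : 2 ≤ n
  periodic : ∀ i : ℤ, P (i + 2 * (n : ℤ)) = P i
  parallel : ∀ i : ℤ, ∃ t : ℝ, P (i + (n : ℤ) + 1) - P (i + (n : ℤ)) = t • (P (i + 1) - P i)
  adj_not_parallel : ∀ i : ℤ, det2 (P (i + 1) - P i) (P (i + 2) - P (i + 1)) ≠ 0
  oriented : ∀ i j : ℤ, 1 ≤ i → i < j → j ≤ (n : ℤ) →
    0 < det2 (P (i + 1) - P i) (P (j + 1) - P j)

/-- `onDiag P n i x` : the point `x` lies on the great diagonal `d_i`,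
the line through `P i` and `P (i+n)`. -/
def onDiag (P : ℤ → ℝ × ℝ) (n : ℕ) (i : ℤ) (x : ℝ × ℝ) : Prop :=
  ∃ t : ℝ, x = P i + t • (P (i + (n : ℤ)) - P i)

/-- `Mpt C i` is the midpoint `M_i = (P_i + P_{i+n})/2` of the great diagonal `d_i`. -/
noncomputable def Mpt {n : ℕ} (C : CPOS n) (i : ℤ) : ℝ × ℝ :=
  (1 / 2 : ℝ) • (C.P i + C.P (i + (n : ℤ)))

/-- `vvec C i` is `v(i+1/2) = M_{i+1} - M_i`. -/
noncomputable def vvec {n : ℕ} (C : CPOS n) (i : ℤ) : ℝ × ℝ := Mpt C (i + 1) - Mpt C i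

/-- `uvec C i` is `u_i = P_i - M_i`. -/
noncomputable def uvec {n : ℕ} (C : CPOS n) (i : ℤ) : ℝ × ℝ := C.P i - Mpt C i

/-- For a CPOS polygon, let `A¹` be the signed area of the polygon
`P_1, …, P_{n+1}` and `A²` the signed area of the polygon `P_{n+1}, …, P_{2n}, P_1`
(the two regions into which the great diagonal `d_1` divides `P`), where the signed area
of `X_1, …, X_m` is `(1/2)Σ [X_k, X_{k+1}]` (indices mod `m`). Then
`A² - A¹ = 2 Σ_{j=1}^n [v(j+1/2), u_j]`. -/
lemma sum_Icc_eq_range (f : ℤ → ℝ) (a : ℤ) (m : ℕ) :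
    ∑ j ∈ Finset.Icc a (a + (m : ℤ) - 1), f j = ∑ i ∈ Finset.range m, f (a + i) := by
  induction m with
  | zero => rw [Finset.range_zero, Finset.sum_empty, Finset.Icc_eq_empty (by omega), Finset.sum_empty]
  | succ m ih =>
      have h1 : a + ((m + 1 : ℕ) : ℤ) - 1 = a + (m : ℤ) := by push_cast; ring
      have hins : Finset.Icc a (a + (m : ℤ)) = insert (a + (m : ℤ)) (Finset.Icc a (a + (m : ℤ) - 1)) := by
        ext x; simp only [Finset.mem_Icc, Finset.mem_insert]; omega
      rw [h1, hins, Finset.sum_insert (by simp [Finset.mem_Icc]), ih, Finset.sum_range_succ,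
        add_comm]

lemma key {n : ℕ} (C : CPOS n) (j : ℤ) :
    2 * det2 (vvec C j) (uvec C j)
      = (1/2) * (det2 (C.P (j + (n : ℤ))) (C.P (j + 1 + (n : ℤ))) - det2 (C.P j) (C.P (j + 1)))
        - (1/2) * (det2 (C.P (j + 1)) (C.P (j + 1 + (n : ℤ))) - det2 (C.P j) (C.P (j + (n : ℤ)))) := by
  obtain ⟨t, ht⟩ := C.parallel j
  have e : j + (n : ℤ) + 1 = j + 1 + (n : ℤ) := by ring
  rw [e] at ht
  have h1 := congrArg Prod.fst ht
  have h2 := congrArg Prod.snd ht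
  simp only [Prod.fst_sub, Prod.snd_sub, Prod.smul_fst, Prod.smul_snd, smul_eq_mul] at h1 h2
  simp only [vvec, uvec, Mpt, det2, Prod.fst_sub, Prod.snd_sub, Prod.fst_add, Prod.snd_add,
    Prod.smul_fst, Prod.smul_snd, smul_eq_mul]
  linear_combination (1/2) * ((C.P (j+1)).1 - (C.P j).1) * h2
    - (1/2) * ((C.P (j+1)).2 - (C.P j).2) * h1

lemma det2_antisymm (v w : ℝ × ℝ) : det2 w v = - det2 v w := by simp [det2]; ring

theorem statement9 {n : ℕ} (C : CPOS n) :
    (1 / 2 : ℝ) * ((∑ k ∈ Finset.Icc ((n : ℤ) + 1) (2 * (n : ℤ) - 1),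
          det2 (C.P k) (C.P (k + 1)))
        + det2 (C.P (2 * (n : ℤ))) (C.P 1) + det2 (C.P 1) (C.P ((n : ℤ) + 1)))
      - (1 / 2 : ℝ) * ((∑ k ∈ Finset.Icc (1 : ℤ) (n : ℤ), det2 (C.P k) (C.P (k + 1)))
        + det2 (C.P ((n : ℤ) + 1)) (C.P 1))
    = 2 * ∑ j ∈ Finset.Icc (1 : ℤ) (n : ℤ), det2 (vvec C j) (uvec C j) := by
  have hn := C.hn
  have hc1 : ((n - 1 : ℕ) : ℤ) = (n : ℤ) - 1 := by omega
  set N : ℤ := (n : ℤ) with hNdef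
  have hN2 : 2 ≤ N := by rw [hNdef]; exact_mod_cast hn
  -- abbreviations
  set F : ℕ → ℝ := fun i => det2 (C.P (1 + (i : ℤ))) (C.P (1 + (i : ℤ) + N)) with hF
  set G : ℕ → ℝ := fun i => det2 (C.P (1 + (i : ℤ))) (C.P (1 + (i : ℤ) + 1)) with hG
  set G' : ℕ → ℝ := fun i => det2 (C.P (1 + (i : ℤ) + N)) (C.P (1 + (i : ℤ) + 1 + N)) with hG'
  -- rewrite RHS sum
  have hR : ∑ j ∈ Finset.Icc (1 : ℤ) N, det2 (vvec C j) (uvec C j)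
      = ∑ i ∈ Finset.range n, det2 (vvec C (1 + (i : ℤ))) (uvec C (1 + (i : ℤ))) := by
    have h := sum_Icc_eq_range (fun j => det2 (vvec C j) (uvec C j)) 1 n
    simpa using h
  -- rewrite A¹ sum
  have hS2 : ∑ k ∈ Finset.Icc (1 : ℤ) N, det2 (C.P k) (C.P (k + 1))
      = ∑ i ∈ Finset.range n, G i := by
    have h := sum_Icc_eq_range (fun k => det2 (C.P k) (C.P (k + 1))) 1 n
    simpa [hG] using h
  -- rewrite A² sum
  have hS1 : ∑ k ∈ Finset.Icc (N + 1) (2 * N - 1), det2 (C.P k) (C.P (k + 1))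
      = ∑ i ∈ Finset.range (n - 1), det2 (C.P (N + 1 + (i : ℤ))) (C.P (N + 1 + (i : ℤ) + 1)) := by
    have h := sum_Icc_eq_range (fun k => det2 (C.P k) (C.P (k + 1))) (N + 1) (n - 1)
    rw [show N + 1 + ((n - 1 : ℕ) : ℤ) - 1 = 2 * N - 1 by rw [hc1]; ring] at h
    exact h
  have hper : C.P (1 + 2 * N) = C.P 1 := C.periodic 1
  -- A² sum assembled
  have hA2 : (∑ k ∈ Finset.Icc (N + 1) (2 * N - 1), det2 (C.P k) (C.P (k + 1)))
      + det2 (C.P (2 * N)) (C.P 1) = ∑ i ∈ Finset.range n, G' i := by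
    have hsplit : ∑ i ∈ Finset.range n, G' i
        = ∑ i ∈ Finset.range (n - 1), G' i + G' (n - 1) := by
      conv_lhs => rw [show n = (n - 1) + 1 by omega, Finset.sum_range_succ]
    rw [hsplit, hS1]
    congr 1
    · apply Finset.sum_congr rfl
      intro i _
      simp only [hG']
      congr 2 <;> ring
    · simp only [hG', hc1]
      rw [show 1 + (N - 1) + N = 2 * N by ring, show 1 + (N - 1) + 1 + N = 1 + 2 * N by ring, hper]
  -- per-term key identity
  have hkey : ∀ i ∈ Finset.range n, 2 * det2 (vvec C (1 + (i : ℤ))) (uvec C (1 + (i : ℤ)))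
      = (1/2) * (G' i - G i) - (1/2) * (F (i + 1) - F i) := by
    intro i _
    have h := key C (1 + (i : ℤ))
    simp only [← hNdef] at h
    rw [h]
    simp only [hF, hG, hG']
    push_cast
    ring_nf
  -- telescoping
  have htel : ∑ i ∈ Finset.range n, (F (i + 1) - F i) = F n - F 0 := Finset.sum_range_sub F n
  have hFn : F n = - F 0 := by
    simp only [hF]
    rw [show 1 + (N : ℤ) + N = 1 + 2 * N by ring, hper]
    push_cast
    rw [det2_antisymm]
  have hF0 : F 0 = det2 (C.P 1) (C.P (N + 1)) := by
    simp only [hF]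
    norm_num
    rw [show 1 + N = N + 1 by ring]
  -- assemble
  rw [hR, Finset.mul_sum, Finset.sum_congr rfl hkey, Finset.sum_sub_distrib,
    ← Finset.mul_sum, ← Finset.mul_sum, Finset.sum_sub_distrib, htel, hFn, hF0,
    hS2, ← hA2]
  rw [det2_antisymm (C.P 1) (C.P (N + 1))]
  ring
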